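/- Under the regularity assumptions, for any two probability distributions ν₁, ν₂ on {0,1}^n, the transition kernel P(π) of the MDP with Bernoulli treatments satisfies W_{d_{E,3}}(ν₁ P(π), ν₂ P(π)) ≤ C·W_{d_{E,3}}(ν₁, ν₂) + 1. -/

import Mathlib

open Finset Filter Topology

noncomputable section

namespace MRT

/-- The state space: binary outcomes for each of the `n` units. -/
abbrev State (n : ℕ) := Fin n → Bool

variable {n : ℕ}

/-- `zc Nbr y i` is `Z_i(y) = ∑_{j ∈ 𝒩_i} y_j`, the number of active neighbors of `i`. -/
def zc (Nbr : Fin n → Finset (Fin n)) (y : State n) (i : Fin n) : ℝ :=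
  ∑ j ∈ Nbr i, (if y j then (1 : ℝ) else 0)

/-- Probability that coordinate `i` is `1` at the next step, starting from state `y`,
under Bernoulli(π i) treatments. -/
def succProb (Nbr : Fin n → Finset (Fin n)) (f : Fin n → Bool → Bool → ℝ → ℝ)
    (π : Fin n → ℝ) (y : State n) (i : Fin n) : ℝ :=
  π i * f i (y i) true (zc Nbr y i) + (1 - π i) * f i (y i) false (zc Nbr y i)

/-- Transition kernel `P(π)` of the MDP with Bernoulli treatments. -/
def kernel (Nbr : Fin n → Finset (Fin n)) (f : Fin n → Bool → Bool → ℝ → ℝ)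
    (π : Fin n → ℝ) (y y' : State n) : ℝ :=
  ∏ i, if y' i then succProb Nbr f π y i else 1 - succProb Nbr f π y i

/-- One-step pushforward `ν P(π)` of a distribution `ν` under the kernel. -/
def step (Nbr : Fin n → Finset (Fin n)) (f : Fin n → Bool → Bool → ℝ → ℝ)
    (π : Fin n → ℝ) (ν : State n → ℝ) : State n → ℝ :=
  fun y' => ∑ y, ν y * kernel Nbr f π y y'

/-- `ν` is a probability distribution on `{0,1}^n`. -/
def IsDist (ν : State n → ℝ) : Prop := (∀ y, 0 ≤ ν y) ∧ ∑ y, ν y = 1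

/-- `μ` is a stationary probability distribution for the kernel. -/
def IsStationary (Nbr : Fin n → Finset (Fin n)) (f : Fin n → Bool → Bool → ℝ → ℝ)
    (π : Fin n → ℝ) (μ : State n → ℝ) : Prop :=
  IsDist μ ∧ step Nbr f π μ = μ

/-- Expectation of `g` under the (finitely supported) distribution `ν`. -/
def expect (ν : State n → ℝ) (g : State n → ℝ) : ℝ := ∑ y, ν y * g y

/-- `γ` is a coupling of `ν₁` and `ν₂`. -/
def IsCoupling (γ : State n × State n → ℝ) (ν₁ ν₂ : State n → ℝ) : Prop :=
  (∀ p, 0 ≤ γ p) ∧ (∀ x, ∑ y, γ (x, y) = ν₁ x) ∧ (∀ y, ∑ x, γ (x, y) = ν₂ y)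

/-- `∑ i |x_i - y_i|` for binary vectors. -/
def hamming (x y : State n) : ℝ := ∑ i : Fin n, (if x i = y i then (0:ℝ) else 1)

/-- The `L1`-Wasserstein distance between two distributions on `{0,1}^n`. -/
def WL1 (ν₁ ν₂ : State n → ℝ) : ℝ :=
  sInf {c | ∃ γ, IsCoupling γ ν₁ ν₂ ∧ c = ∑ p : State n × State n, γ p * hamming p.1 p.2}

/-- `∑_{j ∈ 𝒩_i} |x_j - y_j|` for binary vectors. -/
def nbrDiff (Nbr : Fin n → Finset (Fin n)) (i : Fin n) (x y : State n) : ℝ :=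
  ∑ j ∈ Nbr i, (if x j = y j then (0:ℝ) else 1)

/-- The graph-dependent Wasserstein distance `W_{d_{E,k}}`. -/
def WdE (Nbr : Fin n → Finset (Fin n)) (k : ℕ) (ν₁ ν₂ : State n → ℝ) : ℝ :=
  sInf {c | ∃ γ, IsCoupling γ ν₁ ν₂ ∧
    c = ⨆ i : Fin n,
      (∑ p : State n × State n, γ p * (nbrDiff Nbr i p.1 p.2) ^ k) ^ ((k : ℝ)⁻¹)}

/-- Multilinear extension of `f i` to probabilities `p, w ∈ [0,1]`:
`f_i(p,w,z) = a_i(z) + b_i(z) w + c_i(z) p + d_i(z) w p`. -/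
def fext (f : Fin n → Bool → Bool → ℝ → ℝ) (i : Fin n) (p w z : ℝ) : ℝ :=
  f i false false z + (f i false true z - f i false false z) * w +
    (f i true false z - f i false false z) * p +
    (f i true true z - f i false true z - f i true false z + f i false false z) * w * p

/-- `Q_i = ∑_{j ∈ 𝒩_i} P_j`. -/
def mfQ (Nbr : Fin n → Finset (Fin n)) (P : Fin n → ℝ) (i : Fin n) : ℝ := ∑ j ∈ Nbr i, P j

/-- One step of the mean-field dynamical system. -/
def mfStep (Nbr : Fin n → Finset (Fin n)) (f : Fin n → Bool → Bool → ℝ → ℝ)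
    (π : Fin n → ℝ) (P : Fin n → ℝ) : Fin n → ℝ :=
  fun i => fext f i (P i) (π i) (mfQ Nbr P i)

/-- `P` is a fixed point of the mean-field dynamical system, lying in `[0,1]^n`. -/
def IsMFFixed (Nbr : Fin n → Finset (Fin n)) (f : Fin n → Bool → Bool → ℝ → ℝ)
    (π : Fin n → ℝ) (P : Fin n → ℝ) : Prop :=
  (∀ i, P i ∈ Set.Icc (0:ℝ) 1) ∧ mfStep Nbr f π P = P

/-- Law of a vector of independent Bernoulli(P i) coordinates. -/
def prodLaw (P : Fin n → ℝ) (y : State n) : ℝ := ∏ i, if y i then P i else 1 - P i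

/-- Probability of the treatment vector `w` under independent Bernoulli(π i). -/
def wProb (π : Fin n → ℝ) (w : State n) : ℝ := ∏ i, if w i then π i else 1 - π i

/-- Conditional probability of the next state `y'` given state `y` and treatments `w`. -/
def condProb (Nbr : Fin n → Finset (Fin n)) (f : Fin n → Bool → Bool → ℝ → ℝ)
    (y w y' : State n) : ℝ :=
  ∏ i, if y' i then f i (y i) (w i) (zc Nbr y i) else 1 - f i (y i) (w i) (zc Nbr y i)

/-- Probability of the trajectory `(Y_1, …, Y_{T+1}; W_1, …, W_T)` (indexed from `0` in Lean)
of the MDP with Bernoulli treatments, with initial distribution `ν₀`. -/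
def trajProb (Nbr : Fin n → Finset (Fin n)) (f : Fin n → Bool → Bool → ℝ → ℝ)
    (π : Fin n → ℝ) (T : ℕ) (ν₀ : State n → ℝ)
    (Y : Fin (T + 1) → State n) (W : Fin T → State n) : ℝ :=
  ν₀ (Y 0) * ∏ t : Fin T, wProb π (W t) * condProb Nbr f (Y t.castSucc) (W t) (Y t.succ)

/-- The estimator `f̂_i(y,w)` computed from the trajectory (convention `0/0 = 0`,
which is Lean's division). -/
def fhat {T : ℕ} (Y : Fin (T + 1) → State n) (W : Fin T → State n)
    (i : Fin n) (y w : Bool) : ℝ :=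
  (∑ t : Fin T, if Y t.castSucc i = y ∧ W t i = w then (if Y t.succ i then (1:ℝ) else 0) else 0) /
  (∑ t : Fin T, if Y t.castSucc i = y ∧ W t i = w then (1:ℝ) else 0)

/-- The undirected-graph structure: symmetric neighborhoods without self-loops. -/
def GoodGraph (Nbr : Fin n → Finset (Fin n)) : Prop :=
  (∀ i j, i ∈ Nbr j ↔ j ∈ Nbr i) ∧ ∀ i, i ∉ Nbr i

/-- `f` takes values strictly between 0 and 1. -/
def PosF (f : Fin n → Bool → Bool → ℝ → ℝ) : Prop :=
  ∀ i y w z, 0 ≤ z → f i y w z ∈ Set.Ioo (0:ℝ) 1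

/-- The regularity assumptions: `L`-Lipschitzness in the third argument, the bound `B` on
the effect of the first argument, maximal degree `D`, and the contraction condition
`B + L·D ≤ C < 1`. -/
def Regular (Nbr : Fin n → Finset (Fin n)) (f : Fin n → Bool → Bool → ℝ → ℝ)
    (L B : ℝ) (D : ℕ) (C : ℝ) : Prop :=
  0 ≤ L ∧
  (∀ i y w z₁ z₂, 0 ≤ z₁ → 0 ≤ z₂ → |f i y w z₁ - f i y w z₂| ≤ L * |z₁ - z₂|) ∧
  (∀ i w z, 0 ≤ z → |f i true w z - f i false w z| ≤ B) ∧
  (∀ i, (Nbr i).card ≤ D) ∧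
  B + L * D ≤ C ∧ C < 1

/-- Adjacency matrix of the interference graph. -/
def adjMat (Nbr : Fin n → Finset (Fin n)) : Matrix (Fin n) (Fin n) ℝ :=
  Matrix.of fun i j => if j ∈ Nbr i then (1:ℝ) else 0


/-- Indicator of `Y_i = 1` as a real-valued function of the state. -/
def Yi (i : Fin n) (s : State n) : ℝ := if s i then 1 else 0

/-- `a_i(z) = f_i(0,0,z)`. -/
def aF (f : Fin n → Bool → Bool → ℝ → ℝ) (i : Fin n) (z : ℝ) : ℝ := f i false false z

/-- `b_i(z) = f_i(0,1,z) - f_i(0,0,z)`. -/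
def bF (f : Fin n → Bool → Bool → ℝ → ℝ) (i : Fin n) (z : ℝ) : ℝ :=
  f i false true z - f i false false z

/-- `c_i(z) = f_i(1,0,z) - f_i(0,0,z)`. -/
def cF (f : Fin n → Bool → Bool → ℝ → ℝ) (i : Fin n) (z : ℝ) : ℝ :=
  f i true false z - f i false false z

/-- `d_i(z) = f_i(1,1,z) - f_i(0,1,z) - f_i(1,0,z) + f_i(0,0,z)`. -/
def dF (f : Fin n → Bool → Bool → ℝ → ℝ) (i : Fin n) (z : ℝ) : ℝ :=
  f i true true z - f i false true z - f i true false z + f i false false z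

/-- `â_i` computed from the trajectory. -/
def ahat {T : ℕ} (Y : Fin (T + 1) → State n) (W : Fin T → State n) (i : Fin n) : ℝ :=
  fhat Y W i false false

/-- `b̂_i` computed from the trajectory. -/
def bhat {T : ℕ} (Y : Fin (T + 1) → State n) (W : Fin T → State n) (i : Fin n) : ℝ :=
  fhat Y W i false true - fhat Y W i false false

/-- `ĉ_i` computed from the trajectory. -/
def chat {T : ℕ} (Y : Fin (T + 1) → State n) (W : Fin T → State n) (i : Fin n) : ℝ :=
  fhat Y W i true false - fhat Y W i false false

/-- `d̂_i` computed from the trajectory. -/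
def dhat {T : ℕ} (Y : Fin (T + 1) → State n) (W : Fin T → State n) (i : Fin n) : ℝ :=
  fhat Y W i true true + fhat Y W i false false - fhat Y W i false true - fhat Y W i true false

/-- The plug-in estimator `τ̂_LDE(γ₁, γ₂)` of the long-term direct effect. -/
def ldeHat {T : ℕ} (Y : Fin (T + 1) → State n) (W : Fin T → State n) (γ₁ γ₂ : ℝ) : ℝ :=
  (1 / (n : ℝ)) * ∑ i : Fin n,
    ((ahat Y W i + bhat Y W i * γ₁) / (1 - chat Y W i - dhat Y W i * γ₁) -
      (ahat Y W i + bhat Y W i * γ₂) / (1 - chat Y W i - dhat Y W i * γ₂))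

/-- `P̂_i = (1/T) ∑_{t=1}^T Y_{it}`. -/
def Phat {T : ℕ} (Y : Fin (T + 1) → State n) (i : Fin n) : ℝ :=
  (∑ t : Fin T, if Y t.castSucc i then (1 : ℝ) else 0) / T

/-- The regression estimator `f̂'_i(y,w)_{δ_T}` of the derivative of `f_i` in its third
argument, computed from the trajectory (`Dr` is the degree bound `D_n`, `δ` is `δ_T`). -/
def fhatD (Nbr : Fin n → Finset (Fin n)) {T : ℕ}
    (Y : Fin (T + 1) → State n) (W : Fin T → State n)
    (i : Fin n) (y w : Bool) (Dr δ : ℝ) : ℝ :=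
  let ind : Fin T → ℝ := fun t => if Y t.castSucc i = y ∧ W t i = w then 1 else 0
  let cnt : ℝ := ∑ t, ind t
  let Ybar : ℝ := (∑ t, ind t * (if Y t.succ i then (1 : ℝ) else 0)) / cnt
  let Zbar : ℝ := (∑ t, ind t * zc Nbr (Y t.castSucc) i) / cnt
  (∑ t, ind t * ((if Y t.succ i then (1 : ℝ) else 0) - Ybar) * (zc Nbr (Y t.castSucc) i - Zbar)) /
    max (Dr * T * δ) (∑ t, ind t * (zc Nbr (Y t.castSucc) i - Zbar) ^ 2)

/-- The plug-in estimator `τ̂_LTE(π + Δv, π)/Δ = (1/n)·𝟙ᵀ(M_η − D̂A − Ŵ_κ)⁻¹ û`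
of the (rescaled) long-term total effect. -/
def lteHatOverDelta (Nbr : Fin n → Finset (Fin n)) (π v : Fin n → ℝ) {T : ℕ}
    (Y : Fin (T + 1) → State n) (W : Fin T → State n) (Dn : ℕ) (δ η κ : ℝ) : ℝ :=
  let Dh : Fin n → ℝ := fun i =>
    (1 - π i) * (1 - Phat Y i) * fhatD Nbr Y W i false false Dn δ +
      π i * (1 - Phat Y i) * fhatD Nbr Y W i false true Dn δ +
      Phat Y i * (1 - π i) * fhatD Nbr Y W i true false Dn δ +
      Phat Y i * π i * fhatD Nbr Y W i true true Dn δ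
  let ω : Fin n → ℝ := fun i => min (1 - κ) (chat Y W i + dhat Y W i * π i)
  let u : Fin n → ℝ := fun i => (bhat Y W i + dhat Y W i * Phat Y i) * v i
  let Mη : Matrix (Fin n) (Fin n) ℝ :=
    Matrix.diagonal fun i => max 1 (Dh i * Dn / (1 - η) + ω i)
  (1 / (n : ℝ)) *
    ∑ i : Fin n, ((Mη - Matrix.diagonal Dh * adjMat Nbr - Matrix.diagonal ω)⁻¹.mulVec u) i

end MRT


end



namespace MRTAux
open MRT Finset

variable {n : ℕ}

/-- Disagreement indicator. -/
def ind (x y : State n) (j : Fin n) : ℝ := if x j = y j then 0 else 1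

lemma ind_nonneg (x y : State n) (j : Fin n) : 0 ≤ ind x y j := by
  unfold ind; split <;> norm_num

lemma ind_idem (x y : State n) (j : Fin n) : ind x y j * ind x y j = ind x y j := by
  unfold ind; split <;> norm_num

lemma nbrDiff_eq (Nbr : Fin n → Finset (Fin n)) (i : Fin n) (x y : State n) :
    nbrDiff Nbr i x y = ∑ j ∈ Nbr i, ind x y j := rfl

lemma nbrDiff_nonneg (Nbr : Fin n → Finset (Fin n)) (i : Fin n) (x y : State n) :
    0 ≤ nbrDiff Nbr i x y :=
  Finset.sum_nonneg fun j _ => by split <;> norm_num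

/-- Optimal coupling of two Bernoulli distributions. -/
def cpl (p q : ℝ) : Bool → Bool → ℝ
  | true, true => min p q
  | true, false => max (p - q) 0
  | false, true => max (q - p) 0
  | false, false => min (1 - p) (1 - q)

lemma cpl_nonneg {p q : ℝ} (hp : p ∈ Set.Icc (0:ℝ) 1) (hq : q ∈ Set.Icc (0:ℝ) 1)
    (a b : Bool) : 0 ≤ cpl p q a b := by
  obtain ⟨hp0, hp1⟩ := hp; obtain ⟨hq0, hq1⟩ := hq
  cases a <;> cases b <;> simp only [cpl, le_min_iff, le_max_iff] <;>
    first
      | exact ⟨by linarith, by linarith⟩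
      | exact Or.inr le_rfl

lemma cpl_sum_right (p q : ℝ) (a : Bool) :
    ∑ b, cpl p q a b = if a then p else 1 - p := by
  cases a <;>
    simp only [cpl, Fintype.sum_bool, Bool.false_eq_true, if_true, if_false, min_def,
      max_def] <;> split_ifs <;> first | contradiction | linarith

lemma cpl_sum_left (p q : ℝ) (b : Bool) :
    ∑ a, cpl p q a b = if b then q else 1 - q := by
  cases b <;>
    simp only [cpl, Fintype.sum_bool, Bool.false_eq_true, if_true, if_false, min_def,
      max_def] <;> split_ifs <;> first | contradiction | linarith

lemma cpl_mul_ind (p q : ℝ) :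
    ∑ a, ∑ b, cpl p q a b * (if a = b then (0:ℝ) else 1) = |p - q| := by
  simp only [Fintype.sum_bool, cpl, Bool.false_eq_true, Bool.true_eq_false, if_true,
    if_false, mul_zero, mul_one]
  rcases le_total p q with h | h
  · rw [abs_of_nonpos (by linarith), max_eq_right (by linarith), max_eq_left (by linarith)]
    ring
  · rw [abs_of_nonneg (by linarith), max_eq_left (by linarith), max_eq_right (by linarith)]
    ring

lemma cpl_sum_total (p q : ℝ) : ∑ a, ∑ b, cpl p q a b = 1 := by
  simp only [Fintype.sum_bool, cpl, min_def, max_def]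
  split_ifs <;> linarith

lemma zc_nonneg (Nbr : Fin n → Finset (Fin n)) (y : State n) (i : Fin n) :
    0 ≤ zc Nbr y i :=
  Finset.sum_nonneg fun j _ => by split <;> norm_num

lemma succProb_mem (Nbr : Fin n → Finset (Fin n)) (f : Fin n → Bool → Bool → ℝ → ℝ)
    (π : Fin n → ℝ) (hf : PosF f) (hπ : ∀ i, π i ∈ Set.Ioo (0 : ℝ) 1)
    (y : State n) (i : Fin n) : succProb Nbr f π y i ∈ Set.Icc (0:ℝ) 1 := by
  have hz := zc_nonneg Nbr y i
  obtain ⟨ht0, ht1⟩ := hf i (y i) true _ hz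
  obtain ⟨hf0, hf1⟩ := hf i (y i) false _ hz
  obtain ⟨hπ0, hπ1⟩ := hπ i
  constructor
  · unfold succProb; nlinarith
  · unfold succProb; nlinarith

/-- Sum over all boolean vectors of a product of single-coordinate functions. -/
lemma sum_pi_prod (G : Fin n → Bool → ℝ) :
    ∑ y : State n, ∏ i, G i (y i) = ∏ i, ∑ b, G i b :=
  (Fintype.prod_sum fun i b => G i b).symm

lemma sum_sum_prod (F : Fin n → Bool → Bool → ℝ) :
    ∑ x : State n, ∑ y : State n, ∏ i, F i (x i) (y i) = ∏ i, ∑ a, ∑ b, F i a b := by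
  calc ∑ x : State n, ∑ y : State n, ∏ i, F i (x i) (y i)
      = ∑ x : State n, ∏ i, ∑ b, F i (x i) b :=
        Finset.sum_congr rfl fun x _ => sum_pi_prod fun i b => F i (x i) b
    _ = ∏ i, ∑ a, ∑ b, F i a b := sum_pi_prod fun i a => ∑ b, F i a b

/-- Mismatch bound: `|p_i(x) - p_i(y)| ≤ B·1{x_i ≠ y_i} + L·nbrDiff_i(x,y)`. -/
lemma succProb_diff_le (Nbr : Fin n → Finset (Fin n)) (f : Fin n → Bool → Bool → ℝ → ℝ)
    (π : Fin n → ℝ) {L B : ℝ} (hL0 : 0 ≤ L)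
    (hLip : ∀ i y w z₁ z₂, 0 ≤ z₁ → 0 ≤ z₂ → |f i y w z₁ - f i y w z₂| ≤ L * |z₁ - z₂|)
    (hB : ∀ i w z, 0 ≤ z → |f i true w z - f i false w z| ≤ B)
    (hπ : ∀ i, π i ∈ Set.Ioo (0 : ℝ) 1) (x y : State n) (i : Fin n) :
    |succProb Nbr f π x i - succProb Nbr f π y i| ≤
      B * ind x y i + L * nbrDiff Nbr i x y := by
  have hzx := zc_nonneg Nbr x i
  have hzy := zc_nonneg Nbr y i
  have hznd : |zc Nbr x i - zc Nbr y i| ≤ nbrDiff Nbr i x y := by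
    have : zc Nbr x i - zc Nbr y i =
        ∑ j ∈ Nbr i, ((if x j then (1:ℝ) else 0) - (if y j then (1:ℝ) else 0)) := by
      rw [Finset.sum_sub_distrib]; rfl
    rw [this, nbrDiff_eq]
    refine (Finset.abs_sum_le_sum_abs _ _).trans (Finset.sum_le_sum fun j _ => ?_)
    unfold ind
    cases hxj : x j <;> cases hyj : y j <;> simp [hxj, hyj] <;> norm_num
  have key : ∀ w, |f i (x i) w (zc Nbr x i) - f i (y i) w (zc Nbr y i)| ≤
      B * ind x y i + L * nbrDiff Nbr i x y := by
    intro w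
    have tri : |f i (x i) w (zc Nbr x i) - f i (y i) w (zc Nbr y i)| ≤
        |f i (x i) w (zc Nbr x i) - f i (y i) w (zc Nbr x i)| +
        |f i (y i) w (zc Nbr x i) - f i (y i) w (zc Nbr y i)| := abs_sub_le _ _ _
    have h1 : |f i (x i) w (zc Nbr x i) - f i (y i) w (zc Nbr x i)| ≤ B * ind x y i := by
      unfold ind
      by_cases hxy : x i = y i
      · rw [hxy]; simp
      · rw [if_neg hxy, mul_one]
        cases hxi : x i <;> cases hyi : y i <;>
          first
            | exact absurd (hxi.trans hyi.symm) hxy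
            | exact le_of_eq_of_le (abs_sub_comm _ _) (hB i w _ hzx)
            | exact hB i w _ hzx
    have h2 : |f i (y i) w (zc Nbr x i) - f i (y i) w (zc Nbr y i)| ≤
        L * nbrDiff Nbr i x y :=
      (hLip i (y i) w _ _ hzx hzy).trans (mul_le_mul_of_nonneg_left hznd hL0)
    linarith
  obtain ⟨hπ0, hπ1⟩ := hπ i
  have expand : succProb Nbr f π x i - succProb Nbr f π y i =
      π i * (f i (x i) true (zc Nbr x i) - f i (y i) true (zc Nbr y i)) +
      (1 - π i) * (f i (x i) false (zc Nbr x i) - f i (y i) false (zc Nbr y i)) := by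
    unfold succProb; ring
  rw [expand]
  calc |_| ≤ |π i * (f i (x i) true (zc Nbr x i) - f i (y i) true (zc Nbr y i))| +
      |(1 - π i) * (f i (x i) false (zc Nbr x i) - f i (y i) false (zc Nbr y i))| :=
        abs_add_le _ _
    _ ≤ π i * (B * ind x y i + L * nbrDiff Nbr i x y) +
        (1 - π i) * (B * ind x y i + L * nbrDiff Nbr i x y) := by
        rw [abs_mul, abs_mul, abs_of_nonneg (le_of_lt hπ0),
          abs_of_nonneg (by linarith : (0:ℝ) ≤ 1 - π i)]
        exact add_le_add
          (mul_le_mul_of_nonneg_left (key true) (le_of_lt hπ0))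
          (mul_le_mul_of_nonneg_left (key false) (by linarith))
    _ = B * ind x y i + L * nbrDiff Nbr i x y := by ring


/-- Expectation of a product of disagreement indicators under a product coupling. -/
lemma bigK_moment (P Q : Fin n → ℝ) (u : Finset (Fin n)) :
    ∑ x' : State n, ∑ y' : State n,
      (∏ i, cpl (P i) (Q i) (x' i) (y' i)) * ∏ j ∈ u, ind x' y' j
    = ∏ j ∈ u, |P j - Q j| := by
  classical
  have hpt : ∀ x' y' : State n,
      (∏ i, cpl (P i) (Q i) (x' i) (y' i)) * ∏ j ∈ u, ind x' y' j =
      ∏ i, (cpl (P i) (Q i) (x' i) (y' i) *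
        (if i ∈ u then (if x' i = y' i then (0:ℝ) else 1) else 1)) := by
    intro x' y'
    rw [← Fintype.prod_ite_mem u (fun j => ind x' y' j), ← Finset.prod_mul_distrib]
    rfl
  calc ∑ x' : State n, ∑ y' : State n,
        (∏ i, cpl (P i) (Q i) (x' i) (y' i)) * ∏ j ∈ u, ind x' y' j
      = ∑ x' : State n, ∑ y' : State n, ∏ i, (cpl (P i) (Q i) (x' i) (y' i) *
          (if i ∈ u then (if x' i = y' i then (0:ℝ) else 1) else 1)) :=
        Finset.sum_congr rfl fun x' _ => Finset.sum_congr rfl fun y' _ => hpt x' y'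
    _ = ∏ i, ∑ a, ∑ b, (cpl (P i) (Q i) a b *
          (if i ∈ u then (if a = b then (0:ℝ) else 1) else 1)) :=
        sum_sum_prod (fun i a b => cpl (P i) (Q i) a b *
          (if i ∈ u then (if a = b then (0:ℝ) else 1) else 1))
    _ = ∏ i, (if i ∈ u then |P i - Q i| else 1) := by
        refine Finset.prod_congr rfl fun i _ => ?_
        by_cases hi : i ∈ u
        · simp only [hi, if_true]
          exact cpl_mul_ind (P i) (Q i)
        · simp only [hi, if_false, mul_one]
          exact cpl_sum_total (P i) (Q i)
    _ = ∏ j ∈ u, |P j - Q j| := Fintype.prod_ite_mem u _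

/-- For an idempotent-valued function, a triple product equals the product over the set. -/
lemma prod_triple {g : Fin n → ℝ} (hg : ∀ a, g a * g a = g a) (j k l : Fin n) :
    g j * g k * g l = ∏ a ∈ ({j, k, l} : Finset (Fin n)), g a := by
  classical
  by_cases hjk : j = k
  · subst hjk
    by_cases hjl : j = l
    · subst hjl
      have hset : ({j, j, j} : Finset (Fin n)) = {j} := by simp
      rw [hset, Finset.prod_singleton]
      linear_combination (g j + 1) * hg j
    · have hset : ({j, j, l} : Finset (Fin n)) = {j, l} := by simp
      rw [hset, Finset.prod_insert (by simp [hjl]), Finset.prod_singleton]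
      linear_combination g l * hg j
  · by_cases hjl : j = l
    · subst hjl
      have hset : ({j, k, j} : Finset (Fin n)) = {j, k} := by
        ext a; simp; tauto
      rw [hset, Finset.prod_insert (by simp [hjk]), Finset.prod_singleton]
      linear_combination g k * hg j
    · by_cases hkl : k = l
      · subst hkl
        have hset : ({j, k, k} : Finset (Fin n)) = {j, k} := by simp
        rw [hset, Finset.prod_insert (by simp [hjk]), Finset.prod_singleton]
        linear_combination g j * hg k
      · rw [Finset.prod_insert (by simp [hjk, hjl]),
          Finset.prod_insert (by simp [hkl]), Finset.prod_singleton, mul_assoc]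

/-- Pointwise bound on the product over a triple set. -/
lemma prod_set_le {ε : Fin n → ℝ} (h0 : ∀ a, 0 ≤ ε a) (h1 : ∀ a, ε a ≤ 1) (j k l : Fin n) :
    ∏ a ∈ ({j, k, l} : Finset (Fin n)), ε a ≤
      ε j * ε k * ε l + (if j = k then ε j * ε l else 0) + (if j = l then ε j * ε k else 0) +
        (if k = l then ε j * ε k else 0) + (if j = k ∧ k = l then ε j else 0) := by
  classical
  have nn : ∀ a b : Fin n, 0 ≤ ε a * ε b := fun a b => mul_nonneg (h0 a) (h0 b)
  by_cases hjk : j = k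
  · subst hjk
    by_cases hjl : j = l
    · subst hjl
      have hset : ({j, j, j} : Finset (Fin n)) = {j} := by simp
      rw [hset, Finset.prod_singleton]
      split_ifs <;> first
        | (exfalso; tauto)
        | nlinarith [h0 j, nn j j, h1 j]
    · have hset : ({j, j, l} : Finset (Fin n)) = {j, l} := by simp
      rw [hset, Finset.prod_insert (by simp [hjl]), Finset.prod_singleton]
      split_ifs <;> first
        | (exfalso; tauto)
        | nlinarith [h0 j, h0 l, nn j l, nn j j, h1 j]
  · by_cases hjl : j = l
    · subst hjl
      have hset : ({j, k, j} : Finset (Fin n)) = {j, k} := by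
        ext a; simp; tauto
      rw [hset, Finset.prod_insert (by simp [hjk]), Finset.prod_singleton]
      split_ifs <;> first
        | (exfalso; tauto)
        | nlinarith [h0 j, h0 k, nn j k, h1 j]
    · by_cases hkl : k = l
      · subst hkl
        have hset : ({j, k, k} : Finset (Fin n)) = {j, k} := by simp
        rw [hset, Finset.prod_insert (by simp [hjk]), Finset.prod_singleton]
        split_ifs <;> first
          | (exfalso; tauto)
          | nlinarith [h0 j, h0 k, nn j k, h1 k]
      · rw [Finset.prod_insert (by simp [hjk, hjl]),
          Finset.prod_insert (by simp [hkl]), Finset.prod_singleton]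
        split_ifs <;> first
          | (exfalso; tauto)
          | nlinarith [h0 j, h0 k, h0 l, nn j k, nn j l, nn k l,
              mul_nonneg (nn j k) (h0 l)]

/-- Pulling a finite sum out of an expectation. -/
lemma expect_sum {β : Type*} (K : State n → State n → ℝ) (s : Finset β)
    (h : β → State n → State n → ℝ) :
    ∑ x' : State n, ∑ y' : State n, K x' y' * ∑ b ∈ s, h b x' y' =
      ∑ b ∈ s, ∑ x' : State n, ∑ y' : State n, K x' y' * h b x' y' := by
  simp only [Finset.mul_sum]
  calc ∑ x' : State n, ∑ y' : State n, ∑ b ∈ s, K x' y' * h b x' y'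
      = ∑ x' : State n, ∑ b ∈ s, ∑ y' : State n, K x' y' * h b x' y' :=
        Finset.sum_congr rfl fun x' _ => Finset.sum_comm
    _ = ∑ b ∈ s, ∑ x' : State n, ∑ y' : State n, K x' y' * h b x' y' := Finset.sum_comm

/-- Cube of a finite sum as triple sum. -/
lemma sum_cube {β : Type*} (s : Finset β) (g : β → ℝ) :
    (∑ j ∈ s, g j) ^ 3 = ∑ j ∈ s, ∑ k ∈ s, ∑ l ∈ s, g j * g k * g l := by
  have : (∑ j ∈ s, g j) ^ 3 = (∑ j ∈ s, g j) * (∑ k ∈ s, g k) * (∑ l ∈ s, g l) := by ring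
  rw [this]
  simp only [Finset.sum_mul, Finset.mul_sum]
  exact Finset.sum_congr rfl fun j _ => Finset.sum_congr rfl fun k _ =>
    Finset.sum_congr rfl fun l _ => by ring


lemma sum_if_eq (s : Finset (Fin n)) {j : Fin n} (hj : j ∈ s) (v : ℝ) :
    ∑ l ∈ s, (if j = l then v else 0) = v := by
  simp [Finset.sum_ite_eq, hj]

/-- Summing the pointwise triple bound. -/
lemma triple_bound_sum (s : Finset (Fin n)) (ε : Fin n → ℝ) (h0 : ∀ j, 0 ≤ ε j) :
    ∑ j ∈ s, ∑ k ∈ s, ∑ l ∈ s,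
      (ε j * ε k * ε l + (if j = k then ε j * ε l else 0) + (if j = l then ε j * ε k else 0) +
        (if k = l then ε j * ε k else 0) + (if j = k ∧ k = l then ε j else 0))
    ≤ (∑ j ∈ s, ε j + 1) ^ 3 := by
  classical
  set m := ∑ j ∈ s, ε j with hm
  have hm0 : 0 ≤ m := Finset.sum_nonneg fun j _ => h0 j
  have e1 : ∑ j ∈ s, ∑ k ∈ s, ∑ l ∈ s, ε j * ε k * ε l = m ^ 3 := (sum_cube s ε).symm
  have e2 : ∑ j ∈ s, ∑ k ∈ s, ∑ l ∈ s, (if j = k then ε j * ε l else 0) = m * m := by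
    have inner : ∀ j ∈ s, ∀ k ∈ s, ∑ l ∈ s, (if j = k then ε j * ε l else 0) =
        if j = k then ε j * m else 0 := by
      intro j _ k _
      by_cases h : j = k
      · subst h; rw [if_pos rfl, hm, Finset.mul_sum]
        exact Finset.sum_congr rfl fun l _ => if_pos rfl
      · simp [h]
    calc ∑ j ∈ s, ∑ k ∈ s, ∑ l ∈ s, (if j = k then ε j * ε l else 0)
        = ∑ j ∈ s, ∑ k ∈ s, (if j = k then ε j * m else 0) :=
          Finset.sum_congr rfl fun j hj => Finset.sum_congr rfl fun k hk => inner j hj k hk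
      _ = ∑ j ∈ s, ε j * m := Finset.sum_congr rfl fun j hj => sum_if_eq s hj (ε j * m)
      _ = m * m := by rw [← Finset.sum_mul]
  have e3 : ∑ j ∈ s, ∑ k ∈ s, ∑ l ∈ s, (if j = l then ε j * ε k else 0) = m * m := by
    have inner : ∀ j ∈ s, ∀ k : Fin n, ∑ l ∈ s, (if j = l then ε j * ε k else 0) =
        ε j * ε k := by
      intro j hj k
      exact sum_if_eq s hj _
    calc ∑ j ∈ s, ∑ k ∈ s, ∑ l ∈ s, (if j = l then ε j * ε k else 0)
        = ∑ j ∈ s, ∑ k ∈ s, ε j * ε k :=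
          Finset.sum_congr rfl fun j hj => Finset.sum_congr rfl fun k _ => inner j hj k
      _ = m * m := by rw [← Finset.sum_mul_sum]
  have e4 : ∑ j ∈ s, ∑ k ∈ s, ∑ l ∈ s, (if k = l then ε j * ε k else 0) = m * m := by
    have inner : ∀ (j : Fin n), ∀ k ∈ s, ∑ l ∈ s, (if k = l then ε j * ε k else 0) =
        ε j * ε k := by
      intro j k hk
      exact sum_if_eq s hk _
    calc ∑ j ∈ s, ∑ k ∈ s, ∑ l ∈ s, (if k = l then ε j * ε k else 0)
        = ∑ j ∈ s, ∑ k ∈ s, ε j * ε k :=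
          Finset.sum_congr rfl fun j _ => Finset.sum_congr rfl fun k hk => inner j k hk
      _ = m * m := by rw [← Finset.sum_mul_sum]
  have e5 : ∑ j ∈ s, ∑ k ∈ s, ∑ l ∈ s, (if j = k ∧ k = l then ε j else 0) = m := by
    have inner : ∀ j ∈ s, ∀ k ∈ s, ∑ l ∈ s, (if j = k ∧ k = l then ε j else 0) =
        if j = k then ε j else 0 := by
      intro j _ k hk
      by_cases h : j = k
      · subst h
        simp only [eq_self_iff_true, true_and, if_true]
        exact sum_if_eq s hk _
      · simp [h]
    calc ∑ j ∈ s, ∑ k ∈ s, ∑ l ∈ s, (if j = k ∧ k = l then ε j else 0)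
        = ∑ j ∈ s, ∑ k ∈ s, (if j = k then ε j else 0) :=
          Finset.sum_congr rfl fun j hj => Finset.sum_congr rfl fun k hk => inner j hj k hk
      _ = ∑ j ∈ s, ε j := Finset.sum_congr rfl fun j hj => sum_if_eq s hj _
      _ = m := rfl
  have expand : ∑ j ∈ s, ∑ k ∈ s, ∑ l ∈ s,
      (ε j * ε k * ε l + (if j = k then ε j * ε l else 0) + (if j = l then ε j * ε k else 0) +
        (if k = l then ε j * ε k else 0) + (if j = k ∧ k = l then ε j else 0))
      = m ^ 3 + m * m + m * m + m * m + m := by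
    simp only [Finset.sum_add_distrib]
    rw [e1, e2, e3, e4, e5]
  rw [expand]
  nlinarith [hm0, sq_nonneg m]

/-- Third-moment bound for the sum of coupled disagreement indicators. -/
lemma expect_cube_le (P Q : Fin n → ℝ) (hP : ∀ i, P i ∈ Set.Icc (0:ℝ) 1)
    (hQ : ∀ i, Q i ∈ Set.Icc (0:ℝ) 1) (s : Finset (Fin n)) :
    ∑ x' : State n, ∑ y' : State n,
      (∏ i, cpl (P i) (Q i) (x' i) (y' i)) * (∑ j ∈ s, ind x' y' j) ^ 3
    ≤ (∑ j ∈ s, |P j - Q j| + 1) ^ 3 := by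
  classical
  set K := fun x' y' : State n => ∏ i, cpl (P i) (Q i) (x' i) (y' i) with hK
  set ε := fun j : Fin n => |P j - Q j| with hε
  have hε0 : ∀ j, 0 ≤ ε j := fun j => abs_nonneg _
  have hε1 : ∀ j, ε j ≤ 1 := by
    intro j
    obtain ⟨hP0, hP1⟩ := hP j; obtain ⟨hQ0, hQ1⟩ := hQ j
    rw [hε]; rw [abs_le]; constructor <;> simp <;> linarith
  have swap : ∑ x' : State n, ∑ y' : State n, K x' y' * (∑ j ∈ s, ind x' y' j) ^ 3 =
      ∑ j ∈ s, ∑ k ∈ s, ∑ l ∈ s, ∑ x' : State n, ∑ y' : State n,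
        K x' y' * (ind x' y' j * ind x' y' k * ind x' y' l) := by
    calc ∑ x' : State n, ∑ y' : State n, K x' y' * (∑ j ∈ s, ind x' y' j) ^ 3
        = ∑ x' : State n, ∑ y' : State n, K x' y' *
            ∑ j ∈ s, ∑ k ∈ s, ∑ l ∈ s, ind x' y' j * ind x' y' k * ind x' y' l :=
          Finset.sum_congr rfl fun x' _ => Finset.sum_congr rfl fun y' _ => by
            rw [sum_cube]
      _ = ∑ j ∈ s, ∑ x' : State n, ∑ y' : State n, K x' y' *
            ∑ k ∈ s, ∑ l ∈ s, ind x' y' j * ind x' y' k * ind x' y' l :=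
          expect_sum K s _
      _ = ∑ j ∈ s, ∑ k ∈ s, ∑ x' : State n, ∑ y' : State n, K x' y' *
            ∑ l ∈ s, ind x' y' j * ind x' y' k * ind x' y' l :=
          Finset.sum_congr rfl fun j _ => expect_sum K s _
      _ = ∑ j ∈ s, ∑ k ∈ s, ∑ l ∈ s, ∑ x' : State n, ∑ y' : State n,
            K x' y' * (ind x' y' j * ind x' y' k * ind x' y' l) :=
          Finset.sum_congr rfl fun j _ => Finset.sum_congr rfl fun k _ => expect_sum K s _
  have moment : ∀ j k l : Fin n,
      ∑ x' : State n, ∑ y' : State n,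
        K x' y' * (ind x' y' j * ind x' y' k * ind x' y' l) =
      ∏ a ∈ ({j, k, l} : Finset (Fin n)), ε a := by
    intro j k l
    calc ∑ x' : State n, ∑ y' : State n,
          K x' y' * (ind x' y' j * ind x' y' k * ind x' y' l)
        = ∑ x' : State n, ∑ y' : State n,
            K x' y' * ∏ a ∈ ({j, k, l} : Finset (Fin n)), ind x' y' a :=
          Finset.sum_congr rfl fun x' _ => Finset.sum_congr rfl fun y' _ => by
            rw [prod_triple (fun a => ind_idem x' y' a) j k l]
      _ = ∏ a ∈ ({j, k, l} : Finset (Fin n)), ε a := bigK_moment P Q _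
  rw [swap]
  calc ∑ j ∈ s, ∑ k ∈ s, ∑ l ∈ s, ∑ x' : State n, ∑ y' : State n,
        K x' y' * (ind x' y' j * ind x' y' k * ind x' y' l)
      = ∑ j ∈ s, ∑ k ∈ s, ∑ l ∈ s, ∏ a ∈ ({j, k, l} : Finset (Fin n)), ε a :=
        Finset.sum_congr rfl fun j _ => Finset.sum_congr rfl fun k _ =>
          Finset.sum_congr rfl fun l _ => moment j k l
    _ ≤ ∑ j ∈ s, ∑ k ∈ s, ∑ l ∈ s,
        (ε j * ε k * ε l + (if j = k then ε j * ε l else 0) +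
          (if j = l then ε j * ε k else 0) + (if k = l then ε j * ε k else 0) +
          (if j = k ∧ k = l then ε j else 0)) :=
        Finset.sum_le_sum fun j _ => Finset.sum_le_sum fun k _ =>
          Finset.sum_le_sum fun l _ => prod_set_le hε0 hε1 j k l
    _ ≤ (∑ j ∈ s, ε j + 1) ^ 3 := triple_bound_sum s ε hε0


lemma wcube (c H : ℝ) (hc : 0 ≤ c) (hH : 0 ≤ H) :
    |c ^ ((3:ℝ)⁻¹) * H| ^ (3:ℝ) = c * H ^ 3 := by
  rw [abs_of_nonneg (mul_nonneg (Real.rpow_nonneg hc _) hH),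
    Real.mul_rpow (Real.rpow_nonneg hc _) hH, ← Real.rpow_mul hc]
  have hH3 : H ^ (3:ℝ) = H ^ (3:ℕ) := by
    rw [← Real.rpow_natCast H 3]; norm_num
  rw [hH3]
  norm_num

/-- Weighted `L³` triangle inequality (two functions). -/
lemma wL3_add {ι : Type*} [Fintype ι] (γ F G : ι → ℝ) (hγ : ∀ p, 0 ≤ γ p)
    (hF : ∀ p, 0 ≤ F p) (hG : ∀ p, 0 ≤ G p) :
    (∑ p, γ p * (F p + G p) ^ 3) ^ ((3:ℝ)⁻¹) ≤
      (∑ p, γ p * F p ^ 3) ^ ((3:ℝ)⁻¹) + (∑ p, γ p * G p ^ 3) ^ ((3:ℝ)⁻¹) := by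
  have key := Real.Lp_add_le Finset.univ (fun p => (γ p) ^ ((3:ℝ)⁻¹) * F p)
    (fun p => (γ p) ^ ((3:ℝ)⁻¹) * G p) (by norm_num : (1:ℝ) ≤ 3)
  simp only [one_div] at key
  have e1 : ∑ p : ι, γ p * (F p + G p) ^ 3 =
      ∑ p : ι, |(γ p) ^ ((3:ℝ)⁻¹) * F p + (γ p) ^ ((3:ℝ)⁻¹) * G p| ^ (3:ℝ) :=
    Finset.sum_congr rfl fun p _ => by
      rw [← mul_add, wcube _ _ (hγ p) (add_nonneg (hF p) (hG p))]
  have e2 : ∑ p : ι, γ p * F p ^ 3 = ∑ p : ι, |(γ p) ^ ((3:ℝ)⁻¹) * F p| ^ (3:ℝ) :=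
    Finset.sum_congr rfl fun p _ => (wcube _ _ (hγ p) (hF p)).symm
  have e3 : ∑ p : ι, γ p * G p ^ 3 = ∑ p : ι, |(γ p) ^ ((3:ℝ)⁻¹) * G p| ^ (3:ℝ) :=
    Finset.sum_congr rfl fun p _ => (wcube _ _ (hγ p) (hG p)).symm
  rw [e1, e2, e3]
  exact key

/-- Weighted `L³` triangle inequality (finitely many functions). -/
lemma wL3_sum {ι β : Type*} [Fintype ι] (γ : ι → ℝ) (hγ : ∀ p, 0 ≤ γ p)
    (s : Finset β) (u : β → ι → ℝ) (hu : ∀ b p, 0 ≤ u b p) :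
    (∑ p, γ p * (∑ b ∈ s, u b p) ^ 3) ^ ((3:ℝ)⁻¹) ≤
      ∑ b ∈ s, (∑ p, γ p * (u b p) ^ 3) ^ ((3:ℝ)⁻¹) := by
  classical
  induction s using Finset.induction_on with
  | empty => simp [Real.zero_rpow (by norm_num : ((3:ℝ)⁻¹) ≠ 0)]
  | insert a s ha ih =>
    rw [Finset.sum_insert ha]
    have h1 : ∀ p, ∑ b ∈ insert a s, u b p = u a p + ∑ b ∈ s, u b p := fun p =>
      Finset.sum_insert ha
    calc (∑ p, γ p * (∑ b ∈ insert a s, u b p) ^ 3) ^ ((3:ℝ)⁻¹)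
        = (∑ p, γ p * (u a p + ∑ b ∈ s, u b p) ^ 3) ^ ((3:ℝ)⁻¹) := by
          congr 1; exact Finset.sum_congr rfl fun p _ => by rw [h1]
      _ ≤ (∑ p, γ p * (u a p) ^ 3) ^ ((3:ℝ)⁻¹) +
            (∑ p, γ p * (∑ b ∈ s, u b p) ^ 3) ^ ((3:ℝ)⁻¹) :=
          wL3_add γ (u a) (fun p => ∑ b ∈ s, u b p) hγ (hu a)
            (fun p => Finset.sum_nonneg fun b _ => hu b p)
      _ ≤ (∑ p, γ p * (u a p) ^ 3) ^ ((3:ℝ)⁻¹) +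
            ∑ b ∈ s, (∑ p, γ p * (u b p) ^ 3) ^ ((3:ℝ)⁻¹) := add_le_add_right ih _

lemma rpow3_scalar (c X : ℝ) (hc : 0 ≤ c) (hX : 0 ≤ X) :
    (c ^ 3 * X) ^ ((3:ℝ)⁻¹) = c * X ^ ((3:ℝ)⁻¹) := by
  rw [Real.mul_rpow (pow_nonneg hc 3) hX, ← Real.rpow_natCast c 3, ← Real.rpow_mul hc]
  norm_num


/-- The coupled transition kernel. -/
def bigK (Nbr : Fin n → Finset (Fin n)) (f : Fin n → Bool → Bool → ℝ → ℝ)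
    (π : Fin n → ℝ) (p p' : State n × State n) : ℝ :=
  ∏ i, cpl (succProb Nbr f π p.1 i) (succProb Nbr f π p.2 i) (p'.1 i) (p'.2 i)

/-- One step of the coupled dynamics. -/
def stepCpl (Nbr : Fin n → Finset (Fin n)) (f : Fin n → Bool → Bool → ℝ → ℝ)
    (π : Fin n → ℝ) (γ : State n × State n → ℝ) (p' : State n × State n) : ℝ :=
  ∑ p : State n × State n, γ p * bigK Nbr f π p p'

lemma stepCpl_isCoupling (Nbr : Fin n → Finset (Fin n)) (f : Fin n → Bool → Bool → ℝ → ℝ)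
    (π : Fin n → ℝ) (hf : PosF f) (hπ : ∀ i, π i ∈ Set.Ioo (0 : ℝ) 1)
    (ν₁ ν₂ : State n → ℝ) (γ : State n × State n → ℝ) (hγ : IsCoupling γ ν₁ ν₂) :
    IsCoupling (stepCpl Nbr f π γ) (step Nbr f π ν₁) (step Nbr f π ν₂) := by
  obtain ⟨hpos, hm1, hm2⟩ := hγ
  have hmem : ∀ (y : State n) (i : Fin n), succProb Nbr f π y i ∈ Set.Icc (0:ℝ) 1 :=
    succProb_mem Nbr f π hf hπ
  refine ⟨?_, ?_, ?_⟩
  · intro p'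
    exact Finset.sum_nonneg fun p _ => mul_nonneg (hpos p)
      (Finset.prod_nonneg fun i _ => cpl_nonneg (hmem p.1 i) (hmem p.2 i) _ _)
  · intro x'
    calc ∑ y', stepCpl Nbr f π γ (x', y')
        = ∑ p : State n × State n, γ p * ∑ y', bigK Nbr f π p (x', y') := by
          simp only [stepCpl]
          rw [Finset.sum_comm]
          exact Finset.sum_congr rfl fun p _ => (Finset.mul_sum _ _ _).symm
      _ = ∑ p : State n × State n, γ p * kernel Nbr f π p.1 x' := by
          refine Finset.sum_congr rfl fun p _ => ?_
          congr 1
          calc ∑ y', bigK Nbr f π p (x', y')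
              = ∏ i, ∑ b, cpl (succProb Nbr f π p.1 i) (succProb Nbr f π p.2 i) (x' i) b :=
                sum_pi_prod fun i b =>
                  cpl (succProb Nbr f π p.1 i) (succProb Nbr f π p.2 i) (x' i) b
            _ = kernel Nbr f π p.1 x' :=
                Finset.prod_congr rfl fun i _ => cpl_sum_right _ _ (x' i)
      _ = ∑ x, ∑ y, γ (x, y) * kernel Nbr f π x x' := Fintype.sum_prod_type _
      _ = ∑ x, ν₁ x * kernel Nbr f π x x' := by
          refine Finset.sum_congr rfl fun x _ => ?_
          rw [← Finset.sum_mul, hm1 x]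
      _ = step Nbr f π ν₁ x' := rfl
  · intro y'
    calc ∑ x', stepCpl Nbr f π γ (x', y')
        = ∑ p : State n × State n, γ p * ∑ x', bigK Nbr f π p (x', y') := by
          simp only [stepCpl]
          rw [Finset.sum_comm]
          exact Finset.sum_congr rfl fun p _ => (Finset.mul_sum _ _ _).symm
      _ = ∑ p : State n × State n, γ p * kernel Nbr f π p.2 y' := by
          refine Finset.sum_congr rfl fun p _ => ?_
          congr 1
          calc ∑ x', bigK Nbr f π p (x', y')
              = ∏ i, ∑ a, cpl (succProb Nbr f π p.1 i) (succProb Nbr f π p.2 i) a (y' i) :=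
                sum_pi_prod fun i a =>
                  cpl (succProb Nbr f π p.1 i) (succProb Nbr f π p.2 i) a (y' i)
            _ = kernel Nbr f π p.2 y' :=
                Finset.prod_congr rfl fun i _ => cpl_sum_left _ _ (y' i)
      _ = ∑ x, ∑ y, γ (x, y) * kernel Nbr f π y y' := Fintype.sum_prod_type _
      _ = ∑ y, ∑ x, γ (x, y) * kernel Nbr f π y y' := Finset.sum_comm
      _ = ∑ y, ν₂ y * kernel Nbr f π y y' := by
          refine Finset.sum_congr rfl fun y _ => ?_
          rw [← Finset.sum_mul, hm2 y]
      _ = step Nbr f π ν₂ y' := rfl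


/-- Cost bound for the coupled step. -/
lemma stepCpl_cost_le (Nbr : Fin n → Finset (Fin n)) (f : Fin n → Bool → Bool → ℝ → ℝ)
    (π : Fin n → ℝ) {L B C : ℝ} {D : ℕ} (hf : PosF f) (hπ : ∀ i, π i ∈ Set.Ioo (0 : ℝ) 1)
    (hReg : Regular Nbr f L B D C) (hn : 0 < n)
    (γ : State n × State n → ℝ) (hpos : ∀ p, 0 ≤ γ p) (hsum : ∑ p, γ p = 1) :
    (⨆ i, (∑ p' : State n × State n,
        stepCpl Nbr f π γ p' * nbrDiff Nbr i p'.1 p'.2 ^ 3) ^ ((3:ℝ)⁻¹)) ≤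
      C * (⨆ i, (∑ p : State n × State n,
        γ p * nbrDiff Nbr i p.1 p.2 ^ 3) ^ ((3:ℝ)⁻¹)) + 1 := by
  classical
  obtain ⟨hL0, hLip, hB, hDeg, hC, hC1⟩ := hReg
  haveI : Nonempty (Fin n) := Fin.pos_iff_nonempty.mp hn
  have hB0 : 0 ≤ B := le_trans (abs_nonneg _) (hB ⟨0, hn⟩ true 0 le_rfl)
  have hmem : ∀ (y : State n) (i : Fin n), succProb Nbr f π y i ∈ Set.Icc (0:ℝ) 1 :=
    succProb_mem Nbr f π hf hπ
  set nd := fun (j : Fin n) (p : State n × State n) => nbrDiff Nbr j p.1 p.2 with hnd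
  have hnd0 : ∀ j p, 0 ≤ nd j p := fun j p => nbrDiff_nonneg Nbr j p.1 p.2
  set m := fun (i : Fin n) (p : State n × State n) =>
    ∑ j ∈ Nbr i, |succProb Nbr f π p.1 j - succProb Nbr f π p.2 j| with hm
  have hm0 : ∀ i p, 0 ≤ m i p := fun i p => Finset.sum_nonneg fun j _ => abs_nonneg _
  set W := ⨆ i, (∑ p : State n × State n, γ p * nd i p ^ 3) ^ ((3:ℝ)⁻¹) with hW
  have hterm0 : ∀ j, 0 ≤ (∑ p : State n × State n, γ p * nd j p ^ 3) ^ ((3:ℝ)⁻¹) :=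
    fun j => Real.rpow_nonneg
      (Finset.sum_nonneg fun p _ => mul_nonneg (hpos p) (pow_nonneg (hnd0 j p) 3)) _
  have hW0 : 0 ≤ W := Real.iSup_nonneg hterm0
  have hle : ∀ j, (∑ p : State n × State n, γ p * nd j p ^ 3) ^ ((3:ℝ)⁻¹) ≤ W :=
    fun j => le_ciSup (f := fun i : Fin n =>
      (∑ p : State n × State n, γ p * nd i p ^ 3) ^ ((3:ℝ)⁻¹))
      (Set.Finite.bddAbove (Set.finite_range _)) j
  refine ciSup_le fun i => ?_
  -- Step 1: expectation bound
  have step1 : ∑ p' : State n × State n, stepCpl Nbr f π γ p' * nd i p' ^ 3 ≤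
      ∑ p : State n × State n, γ p * (m i p + 1) ^ 3 := by
    have swap : ∑ p' : State n × State n, stepCpl Nbr f π γ p' * nd i p' ^ 3 =
        ∑ p : State n × State n, γ p *
          ∑ p' : State n × State n, bigK Nbr f π p p' * nd i p' ^ 3 := by
      simp only [stepCpl, Finset.sum_mul]
      rw [Finset.sum_comm]
      exact Finset.sum_congr rfl fun p _ => by
        rw [Finset.mul_sum]
        exact Finset.sum_congr rfl fun p' _ => by ring
    rw [swap]
    refine Finset.sum_le_sum fun p _ => mul_le_mul_of_nonneg_left ?_ (hpos p)
    have expand : ∑ p' : State n × State n, bigK Nbr f π p p' * nd i p' ^ 3 =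
        ∑ x' : State n, ∑ y' : State n,
          (∏ a, cpl (succProb Nbr f π p.1 a) (succProb Nbr f π p.2 a) (x' a) (y' a)) *
            (∑ j ∈ Nbr i, ind x' y' j) ^ 3 := by
      rw [Fintype.sum_prod_type]
      rfl
    rw [expand]
    exact expect_cube_le _ _ (hmem p.1) (hmem p.2) (Nbr i)
  -- Step 2: split off the constant 1
  have mono : (∑ p' : State n × State n, stepCpl Nbr f π γ p' * nd i p' ^ 3) ^ ((3:ℝ)⁻¹) ≤
      (∑ p : State n × State n, γ p * (m i p + 1) ^ 3) ^ ((3:ℝ)⁻¹) := by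
    refine Real.rpow_le_rpow ?_ step1 (by norm_num)
    refine Finset.sum_nonneg fun p' _ => mul_nonneg ?_ (pow_nonneg (hnd0 i p') 3)
    exact Finset.sum_nonneg fun p _ => mul_nonneg (hpos p)
      (Finset.prod_nonneg fun a _ => cpl_nonneg (hmem _ a) (hmem _ a) _ _)
  have split : (∑ p : State n × State n, γ p * (m i p + 1) ^ 3) ^ ((3:ℝ)⁻¹) ≤
      (∑ p : State n × State n, γ p * m i p ^ 3) ^ ((3:ℝ)⁻¹) + 1 := by
    have h := wL3_add γ (m i) (fun _ => 1) hpos (hm0 i) (fun _ => zero_le_one)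
    have h1 : ∑ p : State n × State n, γ p * (1:ℝ) ^ 3 = 1 := by
      simpa using hsum
    rw [h1, Real.one_rpow] at h
    exact h
  -- Step 3: bound m pointwise
  have mpt : ∀ p : State n × State n, m i p ≤ B * nd i p + L * ∑ j ∈ Nbr i, nd j p := by
    intro p
    have hb : ∀ j ∈ Nbr i, |succProb Nbr f π p.1 j - succProb Nbr f π p.2 j| ≤
        B * ind p.1 p.2 j + L * nd j p :=
      fun j _ => succProb_diff_le Nbr f π hL0 hLip hB hπ p.1 p.2 j
    calc m i p ≤ ∑ j ∈ Nbr i, (B * ind p.1 p.2 j + L * nd j p) := Finset.sum_le_sum hb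
      _ = B * nd i p + L * ∑ j ∈ Nbr i, nd j p := by
        rw [Finset.sum_add_distrib, ← Finset.mul_sum, ← Finset.mul_sum]
        rfl
  have step3 : (∑ p : State n × State n, γ p * m i p ^ 3) ^ ((3:ℝ)⁻¹) ≤
      (∑ p : State n × State n,
        γ p * (B * nd i p + L * ∑ j ∈ Nbr i, nd j p) ^ 3) ^ ((3:ℝ)⁻¹) := by
    refine Real.rpow_le_rpow
      (Finset.sum_nonneg fun p _ => mul_nonneg (hpos p) (pow_nonneg (hm0 i p) 3))
      (Finset.sum_le_sum fun p _ => mul_le_mul_of_nonneg_left ?_ (hpos p)) (by norm_num)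
    exact pow_le_pow_left₀ (hm0 i p) (mpt p) 3
  -- Step 4: Minkowski on the two pieces
  have step4 : (∑ p : State n × State n,
      γ p * (B * nd i p + L * ∑ j ∈ Nbr i, nd j p) ^ 3) ^ ((3:ℝ)⁻¹) ≤
      B * (∑ p : State n × State n, γ p * nd i p ^ 3) ^ ((3:ℝ)⁻¹) +
        L * (∑ p : State n × State n,
          γ p * (∑ j ∈ Nbr i, nd j p) ^ 3) ^ ((3:ℝ)⁻¹) := by
    have h := wL3_add γ (fun p => B * nd i p) (fun p => L * ∑ j ∈ Nbr i, nd j p) hpos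
      (fun p => mul_nonneg hB0 (hnd0 i p))
      (fun p => mul_nonneg hL0 (Finset.sum_nonneg fun j _ => hnd0 j p))
    have hBpull : ∑ p : State n × State n, γ p * (B * nd i p) ^ 3 =
        B ^ 3 * ∑ p : State n × State n, γ p * nd i p ^ 3 := by
      rw [Finset.mul_sum]
      exact Finset.sum_congr rfl fun p _ => by ring
    have hLpull : ∑ p : State n × State n, γ p * (L * ∑ j ∈ Nbr i, nd j p) ^ 3 =
        L ^ 3 * ∑ p : State n × State n, γ p * (∑ j ∈ Nbr i, nd j p) ^ 3 := by
      rw [Finset.mul_sum]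
      exact Finset.sum_congr rfl fun p _ => by ring
    rw [hBpull, hLpull, rpow3_scalar B _ hB0
        (Finset.sum_nonneg fun p _ => mul_nonneg (hpos p) (pow_nonneg (hnd0 i p) 3)),
      rpow3_scalar L _ hL0
        (Finset.sum_nonneg fun p _ => mul_nonneg (hpos p)
          (pow_nonneg (Finset.sum_nonneg fun j _ => hnd0 j p) 3))] at h
    exact h
  -- Step 5: Minkowski over the neighborhood
  have step5 : (∑ p : State n × State n,
      γ p * (∑ j ∈ Nbr i, nd j p) ^ 3) ^ ((3:ℝ)⁻¹) ≤ (D : ℝ) * W := by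
    calc (∑ p : State n × State n, γ p * (∑ j ∈ Nbr i, nd j p) ^ 3) ^ ((3:ℝ)⁻¹)
        ≤ ∑ j ∈ Nbr i, (∑ p : State n × State n, γ p * nd j p ^ 3) ^ ((3:ℝ)⁻¹) :=
          wL3_sum γ hpos (Nbr i) nd hnd0
      _ ≤ ∑ _j ∈ Nbr i, W := Finset.sum_le_sum fun j _ => hle j
      _ = (Nbr i).card * W := by rw [Finset.sum_const, nsmul_eq_mul]
      _ ≤ (D : ℝ) * W := by
          refine mul_le_mul_of_nonneg_right ?_ hW0
          exact_mod_cast hDeg i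
  -- Combine
  calc (∑ p' : State n × State n, stepCpl Nbr f π γ p' * nd i p' ^ 3) ^ ((3:ℝ)⁻¹)
      ≤ (∑ p : State n × State n, γ p * m i p ^ 3) ^ ((3:ℝ)⁻¹) + 1 :=
        le_trans mono split
    _ ≤ (B * (∑ p : State n × State n, γ p * nd i p ^ 3) ^ ((3:ℝ)⁻¹) +
          L * (∑ p : State n × State n,
            γ p * (∑ j ∈ Nbr i, nd j p) ^ 3) ^ ((3:ℝ)⁻¹)) + 1 := by
        have := le_trans step3 step4
        linarith
    _ ≤ (B * W + L * ((D : ℝ) * W)) + 1 := by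
        have h1 := mul_le_mul_of_nonneg_left (hle i) hB0
        have h2 := mul_le_mul_of_nonneg_left step5 hL0
        linarith
    _ = (B + L * D) * W + 1 := by ring
    _ ≤ C * W + 1 := by
        have := mul_le_mul_of_nonneg_right hC hW0
        linarith


end MRTAux

open MRT in
/-- under the regularity assumptions, the transition kernel satisfies
`W_{d_{E,3}}(ν₁ P(π), ν₂ P(π)) ≤ C · W_{d_{E,3}}(ν₁, ν₂) + 1`. -/
theorem WdE3_contraction
    (n : ℕ) (Nbr : Fin n → Finset (Fin n)) (f : Fin n → Bool → Bool → ℝ → ℝ)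
    (π : Fin n → ℝ) (L B C : ℝ) (D : ℕ)
    (hG : GoodGraph Nbr)
    (hf : PosF f)
    (hπ : ∀ i, π i ∈ Set.Ioo (0 : ℝ) 1)
    (hReg : Regular Nbr f L B D C)
    (ν₁ ν₂ : State n → ℝ) (h₁ : IsDist ν₁) (h₂ : IsDist ν₂) :
    WdE Nbr 3 (step Nbr f π ν₁) (step Nbr f π ν₂) ≤ C * WdE Nbr 3 ν₁ ν₂ + 1 := by
  classical
  have hcast : (((3:ℕ)):ℝ)⁻¹ = ((3:ℝ))⁻¹ := by norm_num
  rcases Nat.eq_zero_or_pos n with hn | hn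
  · -- degenerate case n = 0
    subst hn
    haveI : Unique (MRT.State 0) := ⟨⟨fun i => i.elim0⟩, fun y => funext fun i => i.elim0⟩
    have hker : ∀ y x' : MRT.State 0, kernel Nbr f π y x' = 1 := fun y x' => by
      simp [kernel]
    have hstep : ∀ (ν : MRT.State 0 → ℝ), IsDist ν → ∀ x', step Nbr f π ν x' = 1 := by
      intro ν hν x'
      calc step Nbr f π ν x' = ∑ y, ν y := Finset.sum_congr rfl fun y _ => by
            rw [hker, mul_one]
        _ = 1 := hν.2
    have c1 : IsCoupling (fun _ : MRT.State 0 × MRT.State 0 => (1:ℝ))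
        (step Nbr f π ν₁) (step Nbr f π ν₂) := by
      refine ⟨fun _ => zero_le_one, fun x => ?_, fun y => ?_⟩
      · rw [hstep ν₁ h₁ x]; exact Fintype.sum_unique _
      · rw [hstep ν₂ h₂ y]; exact Fintype.sum_unique _
    have c2 : IsCoupling (fun _ : MRT.State 0 × MRT.State 0 => (1:ℝ)) ν₁ ν₂ := by
      have hν : ∀ (ν : MRT.State 0 → ℝ), IsDist ν → ∀ x, ν x = 1 := by
        intro ν hν x
        have h := hν.2
        rwa [Finset.sum_eq_single_of_mem x (Finset.mem_univ x)
          (fun b _ hb => absurd (Subsingleton.elim b x) hb)] at h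
      exact ⟨fun _ => zero_le_one, fun x => by rw [hν ν₁ h₁ x]; exact Fintype.sum_unique _,
        fun y => by rw [hν ν₂ h₂ y]; exact Fintype.sum_unique _⟩
    have hset : ∀ (μ₁ μ₂ : MRT.State 0 → ℝ),
        IsCoupling (fun _ : MRT.State 0 × MRT.State 0 => (1:ℝ)) μ₁ μ₂ →
        WdE Nbr 3 μ₁ μ₂ = 0 := by
      intro μ₁ μ₂ hc
      rw [WdE]
      have : {c | ∃ γ, IsCoupling γ μ₁ μ₂ ∧ c = ⨆ i : Fin 0,
          (∑ p : MRT.State 0 × MRT.State 0, γ p * nbrDiff Nbr i p.1 p.2 ^ 3) ^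
            (((3:ℕ):ℝ))⁻¹} = {0} := by
        ext c
        simp only [Set.mem_setOf_eq, Set.mem_singleton_iff]
        constructor
        · rintro ⟨γ, _, rfl⟩
          exact Real.iSup_of_isEmpty _
        · rintro rfl
          exact ⟨_, hc, (Real.iSup_of_isEmpty _).symm⟩
      rw [this, csInf_singleton]
    rw [hset _ _ c1, hset _ _ c2]
    norm_num
  · -- main case n ≥ 1
    haveI : Nonempty (Fin n) := Fin.pos_iff_nonempty.mp hn
    obtain ⟨hL0, hLip, hB, hDeg, hC, hC1⟩ := hReg
    have hB0 : 0 ≤ B := le_trans (abs_nonneg _) (hB ⟨0, hn⟩ true 0 le_rfl)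
    have hC0 : 0 ≤ C :=
      le_trans (add_nonneg hB0 (mul_nonneg hL0 (Nat.cast_nonneg D))) hC
    have hReg' : Regular Nbr f L B D C := ⟨hL0, hLip, hB, hDeg, hC, hC1⟩
    set SB : Set ℝ := {c | ∃ γ, IsCoupling γ ν₁ ν₂ ∧ c = ⨆ i,
      (∑ p : MRT.State n × MRT.State n, γ p * nbrDiff Nbr i p.1 p.2 ^ 3) ^
        (((3:ℕ):ℝ))⁻¹} with hSB
    set SS : Set ℝ := {c | ∃ γ, IsCoupling γ (step Nbr f π ν₁) (step Nbr f π ν₂) ∧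
      c = ⨆ i, (∑ p : MRT.State n × MRT.State n, γ p * nbrDiff Nbr i p.1 p.2 ^ 3) ^
        (((3:ℕ):ℝ))⁻¹} with hSS
    have hWdE1 : WdE Nbr 3 (step Nbr f π ν₁) (step Nbr f π ν₂) = sInf SS := rfl
    have hWdE2 : WdE Nbr 3 ν₁ ν₂ = sInf SB := rfl
    have hSBne : SB.Nonempty := by
      refine ⟨_, ⟨fun p : MRT.State n × MRT.State n => ν₁ p.1 * ν₂ p.2, ?_, rfl⟩⟩
      refine ⟨fun p => mul_nonneg (h₁.1 p.1) (h₂.1 p.2), fun x => ?_, fun y => ?_⟩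
      · show ∑ y, ν₁ x * ν₂ y = ν₁ x
        rw [← Finset.mul_sum, h₂.2, mul_one]
      · show ∑ x, ν₁ x * ν₂ y = ν₂ y
        rw [← Finset.sum_mul, h₁.2, one_mul]
    have hSSbdd : BddBelow SS := by
      refine ⟨0, fun c hc => ?_⟩
      obtain ⟨γ, hγ, rfl⟩ := hc
      refine Real.iSup_nonneg fun i => Real.rpow_nonneg ?_ _
      exact Finset.sum_nonneg fun p _ => mul_nonneg (hγ.1 p)
        (pow_nonneg (MRTAux.nbrDiff_nonneg Nbr i p.1 p.2) 3)
    have key : ∀ c ∈ SB, sInf SS ≤ C * c + 1 := by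
      rintro c ⟨γ, hγ, rfl⟩
      have hpos := hγ.1
      have hsum : ∑ p : MRT.State n × MRT.State n, γ p = 1 := by
        calc ∑ p : MRT.State n × MRT.State n, γ p
            = ∑ x, ∑ y, γ (x, y) := Fintype.sum_prod_type _
          _ = ∑ x, ν₁ x := Finset.sum_congr rfl fun x _ => hγ.2.1 x
          _ = 1 := h₁.2
      have hcoup := MRTAux.stepCpl_isCoupling Nbr f π hf hπ ν₁ ν₂ γ hγ
      have hcost := MRTAux.stepCpl_cost_le Nbr f π hf hπ hReg' hn γ hpos hsum
      have hmem : (⨆ i, (∑ p' : MRT.State n × MRT.State n,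
          MRTAux.stepCpl Nbr f π γ p' * nbrDiff Nbr i p'.1 p'.2 ^ 3) ^
            (((3:ℕ):ℝ))⁻¹) ∈ SS := ⟨_, hcoup, rfl⟩
      refine le_trans (csInf_le hSSbdd hmem) ?_
      rw [hcast]
      exact hcost
    rw [hWdE1, hWdE2]
    rcases eq_or_lt_of_le hC0 with hCeq | hCpos
    · obtain ⟨c, hc⟩ := hSBne
      have h2 := key c hc
      rw [← hCeq] at h2 ⊢
      simpa using h2
    · refine le_of_forall_pos_le_add fun ε hε => ?_
      obtain ⟨c, hcS, hclt⟩ := Real.lt_sInf_add_pos hSBne (div_pos hε hCpos)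
      have h2 := key c hcS
      have hmul : C * c < C * (sInf SB + ε / C) := mul_lt_mul_of_pos_left hclt hCpos
      have hd : C * (sInf SB + ε / C) = C * sInf SB + ε := by
        field_simp
      linarith
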